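/- Let g and h be continuous real-valued functions on [0,1] such that g has finitely many zeros and ∫₀¹ h·sgn(g) dx ≠ 0. Then there exists a real number λ such that ‖g − λh‖₁ < ‖g‖₁, where ‖f‖₁ = ∫₀¹ |f| dx. -/

import Mathlib

open MeasureTheory Set

lemma real_sign_measurable : Measurable Real.sign := by
  have : Real.sign = fun r : ℝ => if r < 0 then (-1:ℝ) else if 0 < r then 1 else 0 := by
    funext r; rfl
  rw [this]
  exact (Measurable.ite (measurableSet_lt measurable_id measurable_const) measurable_const
    (Measurable.ite (measurableSet_lt measurable_const measurable_id) measurable_const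
      measurable_const))

lemma abs_sign_le (a : ℝ) : |Real.sign a| ≤ 1 := by
  rcases Real.sign_apply_eq a with h | h | h <;> rw [h] <;> norm_num

lemma key_ineq (a b t : ℝ) (hb : |b| ≤ t) :
    |a - b| - |a| + b * Real.sign a ≤ if |a| ≤ t then 2 * t else 0 := by
  by_cases h : |a| ≤ t
  · rw [if_pos h]
    have h1 : |a - b| ≤ |a| + |b| := abs_sub a b
    have h2 : b * Real.sign a ≤ |b| := by
      calc b * Real.sign a ≤ |b * Real.sign a| := le_abs_self _
        _ = |b| * |Real.sign a| := abs_mul _ _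
        _ ≤ |b| * 1 := by
            exact mul_le_mul_of_nonneg_left (abs_sign_le a) (abs_nonneg b)
        _ = |b| := mul_one _
    linarith
  · rw [if_neg h]
    push_neg at h
    have hba : |b| < |a| := lt_of_le_of_lt hb h
    rcases lt_trichotomy a 0 with ha | ha | ha
    · have hs : Real.sign a = -1 := Real.sign_of_neg ha
      have h1 : a - b < 0 := by
        have := neg_abs_le b
        have : -|b| ≤ b := neg_abs_le b
        have h2 : |a| = -a := abs_of_neg ha
        linarith [neg_abs_le b, hba, h2 ▸ hba]
      rw [hs, abs_of_neg h1, abs_of_neg ha]; linarith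
    · subst ha; simp at hba; linarith [abs_nonneg b, h, abs_nonneg (0:ℝ)]
    · have hs : Real.sign a = 1 := Real.sign_of_pos ha
      have h1 : 0 < a - b := by
        have h2 : |a| = a := abs_of_pos ha
        linarith [le_abs_self b, h2 ▸ hba]
      rw [hs, abs_of_pos h1, abs_of_pos ha]; linarith

theorem stmt_0 (g h : ℝ → ℝ)
    (hg : ContinuousOn g (Set.Icc 0 1)) (hh : ContinuousOn h (Set.Icc 0 1))
    (hfin : {x ∈ Set.Icc (0:ℝ) 1 | g x = 0}.Finite)
    (hne : ∫ x in (0:ℝ)..1, h x * Real.sign (g x) ≠ 0) :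
    ∃ lam : ℝ, (∫ x in (0:ℝ)..1, |g x - lam * h x|) < ∫ x in (0:ℝ)..1, |g x| := by
  classical
  set c : ℝ := ∫ x in (0:ℝ)..1, h x * Real.sign (g x) with hc
  -- bound for h
  obtain ⟨C, hC⟩ := (isCompact_Icc (a := (0:ℝ)) (b := 1)).exists_bound_of_continuousOn hh
  set M : ℝ := max C 1 with hM
  have hM1 : (1:ℝ) ≤ M := le_max_right _ _
  have hM0 : (0:ℝ) < M := lt_of_lt_of_le one_pos hM1
  have hhM : ∀ x ∈ Set.Icc (0:ℝ) 1, |h x| ≤ M := fun x hx =>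
    le_trans (hC x hx) (le_max_left _ _)
  -- the shrinking sets
  set A : ℕ → Set ℝ := fun n => Set.Icc (0:ℝ) 1 ∩ (fun x => |g x|) ⁻¹' Set.Iic (1/(n+1)) with hA
  have hAclosed : ∀ n, IsClosed (A n) := by
    intro n
    exact ContinuousOn.preimage_isClosed_of_isClosed
      (continuous_abs.comp_continuousOn hg) isClosed_Icc isClosed_Iic
  have hAmeas : ∀ n, MeasurableSet (A n) := fun n => (hAclosed n).measurableSet
  have hAanti : Antitone A := by
    intro m n hmn x hx
    refine ⟨hx.1, ?_⟩
    have h1 : (1:ℝ)/(n+1) ≤ 1/(m+1) := by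
      apply one_div_le_one_div_of_le
      · positivity
      · exact_mod_cast by exact_mod_cast add_le_add_left (Nat.cast_le.mpr hmn) 1
    exact le_trans hx.2 h1
  have hAinter : (⋂ n, A n) = {x ∈ Set.Icc (0:ℝ) 1 | g x = 0} := by
    ext x
    simp only [Set.mem_iInter, hA, Set.mem_inter_iff, Set.mem_preimage, Set.mem_Iic,
      Set.mem_setOf_eq]
    constructor
    · intro hx
      refine ⟨(hx 0).1, ?_⟩
      by_contra hgx
      have hpos : 0 < |g x| := abs_pos.mpr hgx
      obtain ⟨n, hn⟩ := exists_nat_one_div_lt hpos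
      exact absurd ((hx n).2) (not_le.mpr hn)
    · intro ⟨hx1, hx2⟩ n
      refine ⟨hx1, ?_⟩
      rw [hx2, abs_zero]; positivity
  have hAtend : Filter.Tendsto (fun n => volume (A n)) Filter.atTop (nhds 0) := by
    have := MeasureTheory.tendsto_measure_iInter_atTop (μ := volume) (s := A)
      (fun n => (hAmeas n).nullMeasurableSet) hAanti
      ⟨0, by
        refine ne_of_lt (lt_of_le_of_lt (measure_mono (Set.inter_subset_left)) ?_)
        rw [Real.volume_Icc]; exact ENNReal.ofReal_lt_top⟩
    rw [hAinter] at this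
    rw [hfin.measure_zero volume] at this
    exact this
  have hcpos : 0 < |c| := abs_pos.mpr hne
  have htarget : (0:ENNReal) < ENNReal.ofReal (|c| / (2 * M)) := by
    rw [ENNReal.ofReal_pos]; positivity
  obtain ⟨n, hn⟩ := (hAtend.eventually_lt_const htarget).exists
  set ε : ℝ := 1/(n+1) with hε
  have hεpos : 0 < ε := by positivity
  set S : Set ℝ := A n with hS
  have hSvol : (volume S).toReal < |c| / (2 * M) := by
    have hfin' : volume S ≠ ⊤ := by
      refine ne_of_lt (lt_of_le_of_lt (measure_mono (Set.inter_subset_left)) ?_)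
      rw [Real.volume_Icc]; exact ENNReal.ofReal_lt_top
    have := ENNReal.toReal_lt_toReal hfin' ENNReal.ofReal_ne_top |>.mpr hn
    rwa [ENNReal.toReal_ofReal (by positivity)] at this
  -- choose lam
  set lam : ℝ := ε * Real.sign c / M with hlam
  refine ⟨lam, ?_⟩
  have hlamM : |lam| * M ≤ ε := by
    rw [abs_div, abs_mul, abs_of_pos hM0]
    rw [div_mul_eq_mul_div, mul_div_assoc, div_self (ne_of_gt hM0), mul_one,
      abs_of_pos hεpos]
    calc ε * |Real.sign c| ≤ ε * 1 := mul_le_mul_of_nonneg_left (abs_sign_le c) hεpos.le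
      _ = ε := mul_one _
  have hlamc : lam * c = ε * |c| / M := by
    rcases lt_or_gt_of_ne hne with h1 | h1
    · rw [hlam, Real.sign_of_neg h1, abs_of_neg h1]; ring
    · rw [hlam, Real.sign_of_pos h1, abs_of_pos h1]; ring
  -- measure and integrals setup
  set μ : Measure ℝ := volume.restrict (Set.Ioc (0:ℝ) 1) with hμ
  have hsub : Set.Ioc (0:ℝ) 1 ⊆ Set.Icc 0 1 := Set.Ioc_subset_Icc_self
  have hgm : AEMeasurable g μ := by
    have := hg.aemeasurable (μ := volume) measurableSet_Icc
    exact this.mono_measure (Measure.restrict_mono hsub le_rfl)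
  have hhm : AEMeasurable h μ := by
    have := hh.aemeasurable (μ := volume) measurableSet_Icc
    exact this.mono_measure (Measure.restrict_mono hsub le_rfl)
  have hμfin : μ (Set.univ) < ⊤ := by
    rw [hμ, Measure.restrict_apply_univ, Real.volume_Ioc]; exact ENNReal.ofReal_lt_top
  have hae : ∀ᵐ x ∂μ, x ∈ Set.Ioc (0:ℝ) 1 := ae_restrict_mem measurableSet_Ioc
  -- integrability
  have int_g : Integrable (fun x => |g x|) μ :=
    ((continuous_abs.comp_continuousOn hg).integrableOn_Icc).mono_set hsub
  have int_gl : Integrable (fun x => |g x - lam * h x|) μ := by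
    have : ContinuousOn (fun x => |g x - lam * h x|) (Set.Icc (0:ℝ) 1) :=
      continuous_abs.comp_continuousOn (hg.sub ((continuousOn_const).mul hh))
    exact this.integrableOn_Icc.mono_set hsub
  have int_hs : Integrable (fun x => h x * Real.sign (g x)) μ := by
    refine Integrable.mono' (integrable_const M) ?_ ?_
    · exact (hhm.mul (real_sign_measurable.comp_aemeasurable hgm)).aestronglyMeasurable
    · filter_upwards [hae] with x hx
      rw [Real.norm_eq_abs, abs_mul]
      calc |h x| * |Real.sign (g x)| ≤ M * 1 :=
            mul_le_mul (hhM x (hsub hx)) (abs_sign_le _) (abs_nonneg _) (le_of_lt hM0)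
        _ = M := mul_one _
  -- pointwise bound
  have hpt : ∀ᵐ x ∂μ, |g x - lam * h x| - |g x| + (lam * h x) * Real.sign (g x)
      ≤ S.indicator (fun _ => 2 * ε) x := by
    filter_upwards [hae] with x hx
    have hb : |lam * h x| ≤ ε := by
      rw [abs_mul]
      calc |lam| * |h x| ≤ |lam| * M :=
            mul_le_mul_of_nonneg_left (hhM x (hsub hx)) (abs_nonneg _)
        _ ≤ ε := hlamM
    have := key_ineq (g x) (lam * h x) ε hb
    by_cases hgx : |g x| ≤ ε
    · rw [if_pos hgx] at this
      have hxS : x ∈ S := ⟨hsub hx, hgx⟩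
      rw [Set.indicator_of_mem hxS]
      exact this
    · rw [if_neg hgx] at this
      exact le_trans this (Set.indicator_nonneg (fun _ _ => by positivity) x)
  -- integrate the bound
  have int_phi : Integrable (fun x => |g x - lam * h x| - |g x|
      + (lam * h x) * Real.sign (g x)) μ := by
    have h1 : Integrable (fun x => (lam * h x) * Real.sign (g x)) μ := by
      have := int_hs.const_mul lam
      convert this using 2 with x
      ring
    exact (int_gl.sub int_g).add h1
  have int_ind : Integrable (S.indicator (fun _ => 2 * ε)) μ :=
    (integrable_const (2 * ε)).indicator (hAmeas n)
  have hint1 : ∫ x, (|g x - lam * h x| - |g x| + (lam * h x) * Real.sign (g x)) ∂μ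
      ≤ ∫ x, S.indicator (fun _ => 2 * ε) x ∂μ :=
    integral_mono_ae int_phi int_ind hpt
  have hind_val : ∫ x, S.indicator (fun _ => 2 * ε) x ∂μ ≤ 2 * ε * (volume S).toReal := by
    rw [integral_indicator_const _ (hAmeas n)]
    rw [smul_eq_mul, mul_comm]
    apply mul_le_mul_of_nonneg_left _ (by positivity)
    apply ENNReal.toReal_mono
    · refine ne_of_lt (lt_of_le_of_lt (measure_mono (Set.inter_subset_left)) ?_)
      rw [Real.volume_Icc]; exact ENNReal.ofReal_lt_top
    · exact Measure.restrict_le_self _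
  -- split integral
  have hsplit : ∫ x, (|g x - lam * h x| - |g x| + (lam * h x) * Real.sign (g x)) ∂μ
      = (∫ x, |g x - lam * h x| ∂μ) - (∫ x, |g x| ∂μ)
        + lam * ∫ x, h x * Real.sign (g x) ∂μ := by
    have e1 : (fun x => |g x - lam * h x| - |g x| + (lam * h x) * Real.sign (g x))
        = fun x => (|g x - lam * h x| - |g x|) + lam * (h x * Real.sign (g x)) := by
      funext x; ring
    have int_sub : Integrable (fun x => |g x - lam * h x| - |g x|) μ := int_gl.sub int_g
    rw [e1, integral_add int_sub (int_hs.const_mul lam),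
      integral_sub int_gl int_g, MeasureTheory.integral_const_mul lam]
  -- convert interval integrals
  have conv1 : ∫ x in (0:ℝ)..1, |g x - lam * h x| = ∫ x, |g x - lam * h x| ∂μ := by
    rw [intervalIntegral.integral_of_le (by norm_num : (0:ℝ) ≤ 1)]
  have conv2 : ∫ x in (0:ℝ)..1, |g x| = ∫ x, |g x| ∂μ := by
    rw [intervalIntegral.integral_of_le (by norm_num : (0:ℝ) ≤ 1)]
  have conv3 : c = ∫ x, h x * Real.sign (g x) ∂μ := by
    rw [hc, intervalIntegral.integral_of_le (by norm_num : (0:ℝ) ≤ 1)]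
  rw [conv1, conv2]
  rw [← conv3] at hsplit
  have hfinal : 2 * ε * (volume S).toReal < ε * |c| / M := by
    have h2 : (volume S).toReal * (2 * M) < |c| := (lt_div_iff₀ (by positivity)).mp hSvol
    rw [lt_div_iff₀ hM0]
    nlinarith [mul_lt_mul_of_pos_left h2 hεpos]
  linarith [hint1, hind_val, hsplit, hlamc, hfinal]
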